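/- Suppose a, b, c are nonzero reals, and consider P(u) = −(3b(b+1)²/c²) v⁵ − ((b+1)(b+6a+2ab)/(ac)) v³ − ((b+3a+2ab)/(ab)) v as a function of v. If there exist constants λ₂, λ₃ with P(v) = λ₂ v + λ₃ √(c + b v²) for all v in a nonempty open interval on which c + bv² > 0, then b = −1. -/

import Mathlib

theorem stmt_17 (a b c lam₂ lam₃ : ℝ) (ha : a ≠ 0) (hb : b ≠ 0) (hc : c ≠ 0)
    (v₀ v₁ : ℝ) (hlt : v₀ < v₁)
    (hpos : ∀ v ∈ Set.Ioo v₀ v₁, c + b * v ^ 2 > 0)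
    (heq : ∀ v ∈ Set.Ioo v₀ v₁,
      -(3 * b * (b + 1) ^ 2 / c ^ 2) * v ^ 5
        - ((b + 1) * (b + 6 * a + 2 * a * b) / (a * c)) * v ^ 3
        - ((b + 3 * a + 2 * a * b) / (a * b)) * v
      = lam₂ * v + lam₃ * Real.sqrt (c + b * v ^ 2)) :
    b = -1 := by
  set A : ℝ := -(3 * b * (b + 1) ^ 2 / c ^ 2) with hA
  set B : ℝ := -((b + 1) * (b + 6 * a + 2 * a * b) / (a * c)) with hB
  set D : ℝ := -((b + 3 * a + 2 * a * b) / (a * b)) - lam₂ with hD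
  set q : Polynomial ℝ :=
    (Polynomial.C A * Polynomial.X ^ 5 + Polynomial.C B * Polynomial.X ^ 3 +
      Polynomial.C D * Polynomial.X) ^ 2 -
    Polynomial.C (lam₃ ^ 2) * (Polynomial.C c + Polynomial.C b * Polynomial.X ^ 2) with hqdef
  clear_value q
  have hroot : ∀ v ∈ Set.Ioo v₀ v₁, q.IsRoot v := by
    intro v hv
    have h1 := heq v hv
    have h2 := hpos v hv
    have hsq : Real.sqrt (c + b * v ^ 2) ^ 2 = c + b * v ^ 2 :=
      Real.sq_sqrt h2.le
    have hkey : A * v ^ 5 + B * v ^ 3 + D * v = lam₃ * Real.sqrt (c + b * v ^ 2) := by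
      rw [hA, hB, hD]; rw [hA] at h1; linear_combination h1
    simp only [Polynomial.IsRoot, hqdef, Polynomial.eval_sub, Polynomial.eval_pow,
      Polynomial.eval_add, Polynomial.eval_mul, Polynomial.eval_C, Polynomial.eval_X]
    rw [hkey]
    nlinarith [hsq]
  have hq0 : q = 0 := by
    apply q.eq_zero_of_infinite_isRoot
    exact Set.Infinite.mono (fun v hv => hroot v hv) (Set.Ioo_infinite hlt)
  have h10 : q.coeff 10 = A ^ 2 := by
    have hexp : q = Polynomial.C (A^2) * Polynomial.X ^ 10
        + Polynomial.C (A*B + A*B) * Polynomial.X ^ 8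
        + Polynomial.C (B^2 + (A*D + A*D)) * Polynomial.X ^ 6
        + Polynomial.C (B*D + B*D) * Polynomial.X ^ 4
        + Polynomial.C (D^2 - lam₃^2*b) * Polynomial.X ^ 2
        + Polynomial.C (-(lam₃^2*c)) := by
      rw [hqdef]
      simp only [Polynomial.C_add, Polynomial.C_mul, Polynomial.C_pow, Polynomial.C_sub,
        Polynomial.C_neg]
      ring
    rw [hexp]
    simp only [Polynomial.coeff_add, Polynomial.coeff_sub, Polynomial.coeff_C_mul,
      Polynomial.coeff_X_pow, Polynomial.coeff_C]
    norm_num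
  rw [hq0] at h10
  simp at h10
  have hA0 : A = 0 := by
    have := sq_nonneg A
    nlinarith [h10]
  rw [hA] at hA0
  have hc2 : c ^ 2 ≠ 0 := pow_ne_zero 2 hc
  have h3 : 3 * b * (b + 1) ^ 2 = 0 := by
    field_simp at hA0
    linarith [hA0]
  have hb1 : (b + 1) ^ 2 = 0 := by
    rcases mul_eq_zero.mp h3 with h | h
    · rcases mul_eq_zero.mp h with h' | h'
      · norm_num at h'
      · exact absurd h' hb
    · exact h
  have := pow_eq_zero_iff (n := 2) (by norm_num) |>.mp hb1
  linarith
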